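/- If L_pc = 0 (equivalently Δ ∘ L ∘ Δ⊥ = 0), then the dynamics generated by L is NCGD: Δ ∘ exp(tL) ∘ Δ⊥ ∘ exp(τL) ∘ Δ = 0 for all t, τ ≥ 0. -/

import Mathlib

lemma key_exp_block {A : Type*} [NormedRing A] [NormedAlgebra ℂ A] [CompleteSpace A]
    (L Δ : A) (hΔ : Δ * Δ = Δ) (h : Δ * L * (1 - Δ) = 0) (t : ℝ) :
    Δ * NormedSpace.exp (t • L) * (1 - Δ) = 0 := by
  have hL : Δ * L = Δ * L * Δ := by
    have h2 := h
    rw [mul_sub, mul_one, sub_eq_zero] at h2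
    exact h2
  have hfix : ∀ n : ℕ, Δ * L ^ n * Δ = Δ * L ^ n := by
    intro n
    induction n with
    | zero => simp [hΔ]
    | succ n ih =>
      calc Δ * L ^ (n + 1) * Δ = (Δ * L * Δ) * (L ^ n * Δ) := by
            rw [← hL, pow_succ']; noncomm_ring
        _ = (Δ * L) * (Δ * L ^ n * Δ) := by noncomm_ring
        _ = (Δ * L * Δ) * L ^ n := by rw [ih]; noncomm_ring
        _ = Δ * L ^ (n + 1) := by rw [← hL, pow_succ']; noncomm_ring
  have hn : ∀ n : ℕ, Δ * L ^ n * (1 - Δ) = 0 := fun n => by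
    rw [mul_sub, mul_one, hfix n, sub_self]
  have hsum : Summable fun n : ℕ => ((Nat.factorial n : ℂ))⁻¹ • (t • L) ^ n :=
    NormedSpace.expSeries_summable' (𝕂 := ℂ) (t • L)
  rw [NormedSpace.exp_eq_tsum (𝕂 := ℂ), ← hsum.tsum_mul_left Δ,
    ← ((hsum.mul_left Δ).tsum_mul_right (1 - Δ))]
  have hz : ∀ n : ℕ, Δ * (t • L) ^ n * (1 - Δ) = 0 := by
    intro n
    rw [smul_pow, mul_smul_comm, smul_mul_assoc, hn n, smul_zero]
  simp [mul_smul_comm, smul_mul_assoc, hz]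

/-- if `L_pc = 0` then the dynamics generated by `L` is NCGD. -/
theorem pc_zero_implies_ncgd (d : ℕ)
    (L Δ : EuclideanSpace ℂ (Fin d) →L[ℂ] EuclideanSpace ℂ (Fin d)) (hΔ : Δ * Δ = Δ)
    (h : Δ * L * (1 - Δ) = 0) :
    ∀ t τ : ℝ, 0 ≤ t → 0 ≤ τ →
      Δ * NormedSpace.exp (t • L) * (1 - Δ) * NormedSpace.exp (τ • L) * Δ = 0 := by
  intro t τ _ _
  rw [key_exp_block L Δ hΔ h t, zero_mul, zero_mul]
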